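/- arXiv:2307.08096 — 2 statements merged into one kernel-verified Lean document; each statement's English description precedes it below -/
import Mathlib

section
/- A strictly diagonally dominant Z-matrix with positive diagonal entries is an M-matrix, i.e., it is invertible and its inverse has non-negative entries. -/
theorem stmt_1 (M : ℕ) (B : Matrix (Fin M) (Fin M) ℝ)
    (hZ : ∀ i j, i ≠ j → B i j ≤ 0)
    (hdiag : ∀ i, 0 < B i i)
    (hdd : ∀ i, ∑ j ∈ Finset.univ.erase i, |B i j| < |B i i|) :
    IsUnit B ∧ ∀ i j, 0 ≤ B⁻¹ i j := by
  have hdet : B.det ≠ 0 := by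
    apply det_ne_zero_of_sum_row_lt_diag
    simpa [Real.norm_eq_abs] using hdd
  have hUnit : IsUnit B := by
    rw [Matrix.isUnit_iff_isUnit_det]
    exact hdet.isUnit
  refine ⟨hUnit, ?_⟩
  -- key lemma: if B.mulVec x is entrywise nonneg then x is nonneg
  have key : ∀ x : Fin M → ℝ, (∀ i, 0 ≤ B.mulVec x i) → ∀ i, 0 ≤ x i := by
    intro x hx
    by_contra h
    push_neg at h
    obtain ⟨i0, hi0⟩ := h
    -- pick index minimizing x
    have hne : (Finset.univ : Finset (Fin M)).Nonempty := ⟨i0, Finset.mem_univ _⟩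
    obtain ⟨i, _, hmin⟩ := Finset.exists_min_image Finset.univ x hne
    have hxi : x i < 0 := lt_of_le_of_lt (hmin i0 (Finset.mem_univ _)) hi0
    have hrow : 0 < B i i + ∑ j ∈ Finset.univ.erase i, B i j := by
      have h1 : -∑ j ∈ Finset.univ.erase i, B i j ≤ ∑ j ∈ Finset.univ.erase i, |B i j| := by
        rw [← Finset.sum_neg_distrib]
        exact Finset.sum_le_sum fun j hj => neg_le_abs _
      have h2 := hdd i
      rw [abs_of_pos (hdiag i)] at h2
      linarith
    have hle : B.mulVec x i ≤ (B i i + ∑ j ∈ Finset.univ.erase i, B i j) * x i := by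
      rw [Matrix.mulVec, dotProduct]
      rw [← Finset.add_sum_erase _ _ (Finset.mem_univ i)]
      rw [add_mul, Finset.sum_mul]
      apply add_le_add le_rfl
      apply Finset.sum_le_sum
      intro j hj
      have hBij : B i j ≤ 0 := hZ i j (Finset.ne_of_mem_erase hj).symm
      have : x i ≤ x j := hmin j (Finset.mem_univ _)
      nlinarith
    have : B.mulVec x i < 0 :=
      lt_of_le_of_lt hle (mul_neg_of_pos_of_neg hrow hxi)
    exact absurd (hx i) (not_le.mpr this)
  intro i j
  have hinv : B * B⁻¹ = 1 := Matrix.mul_nonsing_inv B hdet.isUnit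
  have : ∀ k, 0 ≤ B.mulVec (fun l => B⁻¹ l j) k := by
    intro k
    have : B.mulVec (fun l => B⁻¹ l j) k = (B * B⁻¹) k j := by
      simp [Matrix.mulVec, Matrix.mul_apply, dotProduct]
    rw [this, hinv]
    by_cases h : k = j <;> simp [Matrix.one_apply, h]
  exact key _ this i
end

section
/- Zalesak limiter produces bounds: Let m_i > 0, antidiffusive fluxes f_ij = −f_ji for j in a neighbor set N_i, values ū_i, and define ū_i^max = max over j ∈ N_i ∪ {i} of ū_j, ū_i^min analogously; P_i^± , Q_i^± , R_i^± and α_ij as in the Zalesak algorithm. Then the vector ũ defined by m_i ũ_i = m_i ū_i + Σ_{j∈N_i} α_ij f_ij satisfies ū_i^min ≤ ũ_i ≤ ū_i^max for all i. -/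
theorem stmt_14 (M : ℕ) (Nb : Fin M → Finset (Fin M))
    (hNb : ∀ i j, j ∈ Nb i ↔ i ∈ Nb j)
    (m : Fin M → ℝ) (hm : ∀ i, 0 < m i)
    (f : Fin M → Fin M → ℝ) (hf : ∀ i j, f i j = -f j i)
    (ubar : Fin M → ℝ)
    (umax umin : Fin M → ℝ)
    (humax : ∀ i, umax i = (insert i (Nb i)).sup' (Finset.insert_nonempty _ _) ubar)
    (humin : ∀ i, umin i = (insert i (Nb i)).inf' (Finset.insert_nonempty _ _) ubar)
    (Pp Pm Qp Qm Rp Rm : Fin M → ℝ)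
    (hPp : ∀ i, Pp i = ∑ j ∈ Nb i, max 0 (f i j))
    (hPm : ∀ i, Pm i = ∑ j ∈ Nb i, min 0 (f i j))
    (hQp : ∀ i, Qp i = m i * (umax i - ubar i))
    (hQm : ∀ i, Qm i = m i * (umin i - ubar i))
    (hRp : ∀ i, Rp i = if Pp i = 0 then 1 else min 1 (Qp i / Pp i))
    (hRm : ∀ i, Rm i = if Pm i = 0 then 1 else min 1 (Qm i / Pm i))
    (α : Fin M → Fin M → ℝ)
    (hα : ∀ i j, α i j =
      if 0 < f i j then min (Rp i) (Rm j)
      else if f i j = 0 then 1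
      else min (Rm i) (Rp j))
    (ut : Fin M → ℝ)
    (hut : ∀ i, m i * ut i = m i * ubar i + ∑ j ∈ Nb i, α i j * f i j) :
    ∀ i, umin i ≤ ut i ∧ ut i ≤ umax i := by
  have hub : ∀ i, ubar i ≤ umax i := by
    intro i; rw [humax i]
    exact Finset.le_sup' ubar (Finset.mem_insert_self i (Nb i))
  have hlb : ∀ i, umin i ≤ ubar i := by
    intro i; rw [humin i]
    exact Finset.inf'_le ubar (Finset.mem_insert_self i (Nb i))
  have hQp0 : ∀ i, 0 ≤ Qp i := fun i => by
    rw [hQp i]; have := hub i; have := (hm i).le; nlinarith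
  have hQm0 : ∀ i, Qm i ≤ 0 := fun i => by
    rw [hQm i]; have := hlb i; have := (hm i).le; nlinarith
  have hPp0 : ∀ i, 0 ≤ Pp i := fun i => by
    rw [hPp i]; exact Finset.sum_nonneg fun j _ => le_max_left _ _
  have hPm0 : ∀ i, Pm i ≤ 0 := fun i => by
    rw [hPm i]; exact Finset.sum_nonpos fun j _ => min_le_left _ _
  have hRp0 : ∀ i, 0 ≤ Rp i := by
    intro i; rw [hRp i]
    split
    · exact zero_le_one
    · exact le_min zero_le_one
        (div_nonneg (hQp0 i) (hPp0 i))
  have hRm0 : ∀ i, 0 ≤ Rm i := by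
    intro i; rw [hRm i]
    split
    · exact zero_le_one
    · exact le_min zero_le_one
        (div_nonneg_iff.mpr (Or.inr ⟨hQm0 i, hPm0 i⟩))
  intro i
  have hterm_up : ∀ j, α i j * f i j ≤ Rp i * max 0 (f i j) := by
    intro j
    rcases lt_trichotomy (f i j) 0 with h | h | h
    · have hα0 : 0 ≤ α i j := by
        rw [hα i j]
        rw [if_neg (by linarith), if_neg (by linarith)]
        exact le_min (hRm0 i) (hRp0 j)
      have : max 0 (f i j) = 0 := max_eq_left h.le
      rw [this, mul_zero]
      exact mul_nonpos_of_nonneg_of_nonpos hα0 h.le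
    · rw [h, mul_zero, max_self, mul_zero]
    · have : max 0 (f i j) = f i j := max_eq_right h.le
      rw [this, hα i j, if_pos h]
      exact mul_le_mul_of_nonneg_right (min_le_left _ _) h.le
  have hterm_lo : ∀ j, Rm i * min 0 (f i j) ≤ α i j * f i j := by
    intro j
    rcases lt_trichotomy (f i j) 0 with h | h | h
    · have : min 0 (f i j) = f i j := min_eq_right h.le
      rw [this, hα i j, if_neg (by linarith), if_neg (by linarith)]
      exact mul_le_mul_of_nonpos_right (min_le_left _ _) h.le
    · rw [h, mul_zero, min_self, mul_zero]
    · have hα0 : 0 ≤ α i j := by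
        rw [hα i j, if_pos h]
        exact le_min (hRp0 i) (hRm0 j)
      have : min 0 (f i j) = 0 := min_eq_left h.le
      rw [this, mul_zero]
      exact mul_nonneg hα0 h.le
  have hsum_up : ∑ j ∈ Nb i, α i j * f i j ≤ Qp i := by
    calc ∑ j ∈ Nb i, α i j * f i j
        ≤ ∑ j ∈ Nb i, Rp i * max 0 (f i j) :=
          Finset.sum_le_sum fun j _ => hterm_up j
      _ = Rp i * Pp i := by rw [hPp i, Finset.mul_sum]
      _ ≤ Qp i := by
          rw [hRp i]
          split
          · next h => rw [h, mul_zero]; exact hQp0 i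
          · next h =>
              have hPpos : 0 < Pp i := lt_of_le_of_ne (hPp0 i) (Ne.symm h)
              calc min 1 (Qp i / Pp i) * Pp i
                  ≤ (Qp i / Pp i) * Pp i :=
                    mul_le_mul_of_nonneg_right (min_le_right _ _) hPpos.le
                _ = Qp i := div_mul_cancel₀ _ hPpos.ne'
  have hsum_lo : Qm i ≤ ∑ j ∈ Nb i, α i j * f i j := by
    calc Qm i ≤ Rm i * Pm i := by
          rw [hRm i]
          split
          · next h => rw [h, mul_zero]; exact hQm0 i
          · next h =>
              have hPneg : Pm i < 0 := lt_of_le_of_ne (hPm0 i) h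
              calc Qm i = (Qm i / Pm i) * Pm i := (div_mul_cancel₀ _ hPneg.ne).symm
                _ ≤ min 1 (Qm i / Pm i) * Pm i :=
                    mul_le_mul_of_nonpos_right (min_le_right _ _) hPneg.le
      _ = ∑ j ∈ Nb i, Rm i * min 0 (f i j) := by rw [hPm i, Finset.mul_sum]
      _ ≤ ∑ j ∈ Nb i, α i j * f i j :=
          Finset.sum_le_sum fun j _ => hterm_lo j
  have h1 : m i * ut i ≤ m i * umax i := by
    rw [hut i]; have := hsum_up; rw [hQp i] at this; linarith
  have h2 : m i * umin i ≤ m i * ut i := by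
    rw [hut i]; have := hsum_lo; rw [hQm i] at this; linarith
  exact ⟨(mul_le_mul_iff_of_pos_left (hm i)).mp h2, (mul_le_mul_iff_of_pos_left (hm i)).mp h1⟩
end
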